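/- Let G be a graph with chromatic number greater than k and suppose G has no cycle of length congruent to 1 mod k. Then a contradiction follows; equivalently, every graph with no cycle of length congruent to 1 modulo k is k-colorable. -/

import Mathlib

open SimpleGraph
open scoped Classical

/-- `H` is a cycle subgraph of `G`: its vertices and edges are those of some cycle walk. -/
def IsCycleSubgraph {V : Type*} (G : SimpleGraph V) (H : G.Subgraph) : Prop :=
  ∃ (v : V) (w : G.Walk v v), w.IsCycle ∧
    H.verts = {x | x ∈ w.support} ∧ H.edgeSet = {e | e ∈ w.edges}

/-- The set of cycle subgraphs of `G` whose length (number of edges) is `m` mod `r`. -/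
def modCycles {V : Type*} (G : SimpleGraph V) (r m : ℕ) : Set G.Subgraph :=
  {H | IsCycleSubgraph G H ∧ H.edgeSet.ncard % r = m}

/-- `G` is `k`-critical: `χ(G) = k` and every proper subgraph is `(k-1)`-colorable. -/
def IsCritical {V : Type*} [Fintype V] (G : SimpleGraph V) (k : ℕ) : Prop :=
  G.chromaticNumber = (k : ℕ∞) ∧
    ∀ H : G.Subgraph, H ≠ ⊤ → H.coe.Colorable (k - 1)

section Aux

variable {V : Type*} {G : SimpleGraph V} {k : ℕ}

/-- From the subgraph-level hypothesis we get a walk-level hypothesis. -/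
lemma no_bad_cycle_walk (h : ∀ H : G.Subgraph, IsCycleSubgraph G H → H.edgeSet.ncard % k ≠ 1)
    (v : V) (w : G.Walk v v) (hw : w.IsCycle) : w.length % k ≠ 1 := by
  have hH : IsCycleSubgraph G w.toSubgraph :=
    ⟨v, w, hw, w.verts_toSubgraph, w.edgeSet_toSubgraph⟩
  have := h w.toSubgraph hH
  have hset : w.toSubgraph.edgeSet = ↑w.edges.toFinset := by
    rw [w.edgeSet_toSubgraph]; ext e; simp
  have hcard : w.toSubgraph.edgeSet.ncard = w.length := by
    rw [hset, Set.ncard_coe_finset, List.toFinset_card_of_nodup hw.edges_nodup,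
      w.length_edges]
  rwa [hcard] at this

/-- Build a walk out of a list whose consecutive elements are adjacent. -/
lemma exists_walk_of_chain :
    ∀ (l : List V) (a b : V), List.Chain G.Adj a (l ++ [b]) →
      ∃ p : G.Walk a b, p.support = a :: (l ++ [b]) := by
  intro l
  induction l with
  | nil =>
    intro a b hc
    rw [List.nil_append] at hc; unfold List.Chain at hc; rw [List.chain_cons] at hc
    exact ⟨Walk.cons hc.1 Walk.nil, by simp⟩
  | cons x l ih =>
    intro a b hc
    rw [List.cons_append] at hc; unfold List.Chain at hc; rw [List.chain_cons] at hc
    obtain ⟨p, hp⟩ := ih x b hc.2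
    exact ⟨Walk.cons hc.1 p, by simp [hp]⟩

/-- The closing edge of a would-be cycle is not among the edges of the path,
provided the path has length at least 2. -/
lemma closing_edge_not_mem {a b : V} (p : G.Walk a b) (hnd : p.support.Nodup)
    (hlen : 2 ≤ p.length) : s(b, a) ∉ p.edges := by
  cases p with
  | nil => simp at hlen
  | @cons _ c _ hac q =>
    intro hmem
    rw [Walk.edges_cons, List.mem_cons] at hmem
    rw [Walk.support_cons, List.nodup_cons] at hnd
    rcases hmem with heq | hmem
    · rw [Sym2.eq_iff] at heq
      rcases heq with ⟨rfl, rfl⟩ | ⟨rfl, -⟩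
      · exact G.irrefl hac
      · -- b = c, so q : G.Walk b b with nodup support
        cases q with
        | nil => simp at hlen
        | cons h' q' =>
          exact absurd (Walk.end_mem_support q') (by
            have := hnd.2
            rw [Walk.support_cons, List.nodup_cons] at this
            exact this.1)
    · exact hnd.1 (Walk.snd_mem_support_of_mem_edges q hmem)

lemma mod_succ_ne (hk : 2 ≤ k) (a : ℕ) : a % k ≠ (a + 1) % k := by
  intro hEq
  have hdvd : k ∣ (a + 1) - a := (Nat.modEq_iff_dvd' (Nat.le_succ a)).mp hEq
  simp only [Nat.succ_sub a.le_refl] at hdvd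
  have := Nat.le_of_dvd one_pos (by simpa using hdvd)
  omega

/-- Key combinatorial step: if `L₀ ++ [t]` is the current DFS stack (a path in `G`),
`v` is a fresh vertex adjacent to the top `t`, and `v` is also adjacent to the
stack entry at position `i`, then `i` is not congruent to the depth of `v`. -/
lemma key_ne (hk : 2 ≤ k)
    (hcyc : ∀ (v : V) (w : G.Walk v v), w.IsCycle → w.length % k ≠ 1)
    (L₀ : List V) (t v : V)
    (hch : (L₀ ++ [t]).Chain' G.Adj) (hnd : (L₀ ++ [t]).Nodup)
    (hvL : v ∉ L₀ ++ [t]) (htv : G.Adj t v)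
    (i : ℕ) (hi : i < (L₀ ++ [t]).length)
    (hadj : G.Adj v ((L₀ ++ [t])[i]'hi)) :
    i % k ≠ (L₀.length + 1) % k := by
  intro hEq
  set L : List V := L₀ ++ [t] with hL
  have hlenL : L.length = L₀.length + 1 := by simp [hL]
  by_cases hit : i = L₀.length
  · -- then L[i] = t, and i % k = (i+1) % k, impossible
    subst hit
    exact mod_succ_ne hk L₀.length hEq
  · have hilt : i < L₀.length := by omega
    -- Build the cycle: L[i], L[i+1], ..., t, v, back to L[i].
    have hDdef : L.drop i = (L[i]'hi) :: L.drop (i + 1) := List.drop_eq_getElem_cons hi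
    have hchD : (L.drop i ++ [v]).Chain' G.Adj := by
      unfold List.Chain'; rw [List.isChain_append]
      refine ⟨hch.drop i, List.isChain_singleton v, ?_⟩
      intro x hx y hy
      rw [List.head?_cons, Option.mem_some_iff] at hy
      subst hy
      have hlast : L.getLast? = some t := by
        simp [hL, List.getLast?_concat]
      have : (L.drop i).getLast? = some t := by
        rw [List.getLast?_drop, if_neg (by omega)]
        exact hlast
      rw [this, Option.mem_some_iff] at hx
      subst hx
      exact htv
    have hchain : List.Chain G.Adj (L[i]'hi) (L.drop (i + 1) ++ [v]) := by
      have hc2 : List.Chain' G.Adj ((L[i]'hi) :: (L.drop (i + 1) ++ [v])) := by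
        rw [← List.cons_append, ← hDdef]; exact hchD
      exact hc2
    obtain ⟨p, hp⟩ := exists_walk_of_chain (L.drop (i + 1)) (L[i]'hi) v hchain
    have hsupp : p.support = L.drop i ++ [v] := by
      rw [hp, hDdef, List.cons_append]
    have hpnd : p.support.Nodup := by
      rw [hsupp]
      have hDnd : (L.drop i).Nodup := hnd.sublist (List.drop_sublist i L)
      have hvD : v ∉ L.drop i := fun hv => hvL (List.mem_of_mem_drop hv)
      rw [List.nodup_append]
      exact ⟨hDnd, List.nodup_singleton v, fun a ha b hb hab => hvD (by rw [List.mem_singleton] at hb; rw [hab, hb] at ha; exact ha)⟩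
    have hplen : p.length = L.length - i := by
      have := p.length_support
      rw [hsupp] at this
      have hdl : (L.drop i).length = L.length - i := List.length_drop
      simp only [List.length_append, List.length_singleton] at this
      omega
    have hplen2 : 2 ≤ p.length := by
      rw [hplen, hlenL]; omega
    have hclose : s(v, L[i]'hi) ∉ p.edges := closing_edge_not_mem p hpnd hplen2
    have hcycle : (Walk.cons hadj p).IsCycle := by
      rw [Walk.cons_isCycle_iff]
      exact ⟨(Walk.isPath_def p).mpr hpnd, hclose⟩
    apply hcyc _ _ hcycle
    -- length of the cycle is p.length + 1 = L.length - i + 1 ≡ 1 [MOD k]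
    have hile : i ≤ L₀.length + 1 := by omega
    have hdvd : k ∣ (L₀.length + 1) - i := (Nat.modEq_iff_dvd' hile).mp hEq
    obtain ⟨c, hc⟩ := hdvd
    have hlc : (Walk.cons hadj p).length = k * c + 1 := by
      rw [Walk.length_cons, hplen, hlenL]
      omega
    rw [hlc, Nat.mul_add_mod]
    exact Nat.mod_eq_of_lt (by omega)

end Aux

section Main

variable {V : Type*} [Fintype V] {G : SimpleGraph V} {k : ℕ}

/-- The DFS induction. -/
lemma dfs_main (hk : 2 ≤ k)
    (hcyc : ∀ (v : V) (w : G.Walk v v), w.IsCycle → w.length % k ≠ 1) :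
    ∀ (n : ℕ) (S : Finset V) (L : List V) (c : V → ℕ),
      2 * (Finset.univ \ S).card + L.length ≤ n →
      L.Chain' G.Adj →
      L.Nodup →
      (∀ x ∈ L, x ∈ S) →
      (∀ (i : ℕ) (hi : i < L.length), c (L[i]'hi) = i % k) →
      (∀ v ∈ S, c v < k) →
      (∀ u ∈ S, ∀ v ∈ S, G.Adj u v → c u ≠ c v) →
      (∀ v, v ∉ S → ∀ u ∈ S, G.Adj v u → u ∈ L) →
      ∃ c' : V → ℕ, (∀ v, c' v < k) ∧ ∀ u v, G.Adj u v → c' u ≠ c' v := by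
  intro n
  induction n with
  | zero =>
    intro S L c hM hch hnd hLS hcol hclt hprop hout
    -- S must be univ
    have hS : S = Finset.univ := by
      by_contra hne
      have : (Finset.univ \ S).Nonempty := by
        rw [Finset.sdiff_nonempty]
        intro hsub
        exact hne (Finset.eq_univ_iff_forall.mpr fun x => hsub (Finset.mem_univ x))
      have := Finset.card_pos.mpr this
      omega
    refine ⟨c, fun v => hclt v (hS ▸ Finset.mem_univ v), fun u v huv => ?_⟩
    exact hprop u (hS ▸ Finset.mem_univ u) v (hS ▸ Finset.mem_univ v) huv
  | succ n ih =>
    intro S L c hM hch hnd hLS hcol hclt hprop hout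
    by_cases hSU : S = Finset.univ
    · refine ⟨c, fun v => hclt v (hSU ▸ Finset.mem_univ v), fun u v huv => ?_⟩
      exact hprop u (hSU ▸ Finset.mem_univ u) v (hSU ▸ Finset.mem_univ v) huv
    rcases List.eq_nil_or_concat' L with rfl | ⟨L₀, t, rfl⟩
    · -- stack empty: start a new root
      obtain ⟨v, hv⟩ : ∃ v, v ∉ S := by
        by_contra hall
        push_neg at hall
        exact hSU (Finset.eq_univ_iff_forall.mpr hall)
      have hvmem : v ∈ Finset.univ \ S := by simp [hv]
      have hcard : 1 ≤ (Finset.univ \ S).card := Finset.card_pos.mpr ⟨v, hvmem⟩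
      have hcard' : (Finset.univ \ Insert.insert v S).card = (Finset.univ \ S).card - 1 := by
        rw [Finset.sdiff_insert, Finset.card_erase_of_mem hvmem]
      apply ih (insert v S) [v] (Function.update c v 0)
      · rw [hcard']; simp only [List.length_singleton, List.length_nil] at hM ⊢; omega
      · exact List.isChain_singleton v
      · exact List.nodup_singleton v
      · intro x hx; rw [List.mem_singleton] at hx; rw [hx]; exact Finset.mem_insert_self v S
      · intro i hi
        simp only [List.length_singleton] at hi
        interval_cases i
        simp [Function.update_self]
      · intro u hu
        by_cases huv : u = v
        · rw [huv, Function.update_self]; omega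
        · rw [Function.update_of_ne huv]
          exact hclt u ((Finset.mem_insert.mp hu).resolve_left huv)
      · intro u hu w hw huw
        by_cases huv : u = v
        · by_cases hwv : w = v
          · rw [huv, hwv] at huw; exact absurd huw (G.loopless.irrefl _)
          · have hw' : w ∈ S := (Finset.mem_insert.mp hw).resolve_left hwv
            rw [huv] at huw
            exact absurd (hout v hv w hw' huw) (List.not_mem_nil (a := w))
        · have hu' : u ∈ S := (Finset.mem_insert.mp hu).resolve_left huv
          by_cases hwv : w = v
          · rw [hwv] at huw
            exact absurd (hout v hv u hu' huw.symm) (List.not_mem_nil (a := u))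
          · have hw' : w ∈ S := (Finset.mem_insert.mp hw).resolve_left hwv
            rw [Function.update_of_ne huv, Function.update_of_ne hwv]
            exact hprop u hu' w hw' huw
      · intro x hx u hu hxu
        by_cases huv : u = v
        · rw [huv]; exact List.mem_singleton_self v
        · exact absurd (hout x (fun hxS => hx (Finset.mem_insert_of_mem hxS)) u
            ((Finset.mem_insert.mp hu).resolve_left huv) hxu) (List.not_mem_nil (a := u))
    · -- stack is L₀ ++ [t]
      have htL : t ∈ L₀ ++ [t] := by simp
      have htS : t ∈ S := hLS t htL
      by_cases hpush : ∃ v, v ∉ S ∧ G.Adj t v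
      · -- push
        obtain ⟨v, hvS, htv⟩ := hpush
        have hvL : v ∉ L₀ ++ [t] := fun hvl => hvS (hLS v hvl)
        have hvmem : v ∈ Finset.univ \ S := by simp [hvS]
        have hcard : 1 ≤ (Finset.univ \ S).card := Finset.card_pos.mpr ⟨v, hvmem⟩
        have hcard' : (Finset.univ \ Insert.insert v S).card = (Finset.univ \ S).card - 1 := by
          rw [Finset.sdiff_insert, Finset.card_erase_of_mem hvmem]
        set m : ℕ := L₀.length + 1 with hm
        have hlenL : (L₀ ++ [t]).length = m := by simp [hm]
        apply ih (insert v S) ((L₀ ++ [t]) ++ [v]) (Function.update c v (m % k))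
        · rw [hcard']
          simp only [List.length_append, List.length_singleton] at hM ⊢
          omega
        · unfold List.Chain'; rw [List.isChain_append]
          refine ⟨hch, List.isChain_singleton v, ?_⟩
          intro x hx y hy
          rw [List.head?_cons, Option.mem_some_iff] at hy
          rw [List.getLast?_concat, Option.mem_some_iff] at hx
          subst hx; subst hy
          exact htv
        · rw [List.nodup_append]
          exact ⟨hnd, List.nodup_singleton v, fun a ha b hb hab => hvL (by rw [List.mem_singleton] at hb; rw [hab, hb] at ha; exact ha)⟩
        · intro x hx
          rcases List.mem_append.mp hx with hx | hx
          · exact Finset.mem_insert_of_mem (hLS x hx)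
          · rw [List.mem_singleton] at hx; rw [hx]; exact Finset.mem_insert_self v S
        · intro i hi
          simp only [List.length_append, List.length_singleton] at hi
          by_cases him : i < (L₀ ++ [t]).length
          · rw [List.getElem_append_left him]
            have hne : (L₀ ++ [t])[i]'him ≠ v := fun hEq => hvL (hEq ▸ List.getElem_mem _)
            rw [Function.update_of_ne hne]
            exact hcol i him
          · have hieq : i = (L₀ ++ [t]).length := by omega
            subst hieq
            rw [List.getElem_concat_length rfl, Function.update_self, hlenL]
        · intro u hu
          by_cases huv : u = v
          · rw [huv, Function.update_self]; exact Nat.mod_lt _ (by omega)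
          · rw [Function.update_of_ne huv]
            exact hclt u ((Finset.mem_insert.mp hu).resolve_left huv)
        · -- properness
          intro u hu w hw huw
          by_cases huv : u = v
          · by_cases hwv : w = v
            · rw [huv, hwv] at huw; exact absurd huw (G.loopless.irrefl _)
            · have hw' : w ∈ S := (Finset.mem_insert.mp hw).resolve_left hwv
              rw [huv] at huw
              have hwL : w ∈ L₀ ++ [t] := hout v hvS w hw' huw
              obtain ⟨i, hi, hiw⟩ := List.mem_iff_getElem.mp hwL
              rw [huv, Function.update_self, Function.update_of_ne hwv]
              have hkey := key_ne hk hcyc L₀ t v hch hnd hvL htv i hi (hiw ▸ huw)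
              rw [← hiw, hcol i hi]
              exact fun hEq => hkey hEq.symm
          · have hu' : u ∈ S := (Finset.mem_insert.mp hu).resolve_left huv
            by_cases hwv : w = v
            · rw [hwv] at huw
              have huL : u ∈ L₀ ++ [t] := hout v hvS u hu' huw.symm
              obtain ⟨i, hi, hiu⟩ := List.mem_iff_getElem.mp huL
              rw [hwv, Function.update_self, Function.update_of_ne huv]
              have hkey := key_ne hk hcyc L₀ t v hch hnd hvL htv i hi (hiu ▸ huw.symm)
              rw [← hiu, hcol i hi]
              exact hkey
            · have hw' : w ∈ S := (Finset.mem_insert.mp hw).resolve_left hwv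
              rw [Function.update_of_ne huv, Function.update_of_ne hwv]
              exact hprop u hu' w hw' huw
        · intro x hx u hu hxu
          by_cases huv : u = v
          · rw [huv]; exact List.mem_append_right _ (List.mem_singleton_self v)
          · exact List.mem_append_left _
              (hout x (fun hxS => hx (Finset.mem_insert_of_mem hxS)) u
                ((Finset.mem_insert.mp hu).resolve_left huv) hxu)
      · -- pop
        push_neg at hpush
        apply ih S L₀ c
        · simp only [List.length_append, List.length_singleton] at hM; omega
        · exact hch.prefix (List.prefix_append L₀ [t])
        · exact hnd.sublist (List.sublist_append_left L₀ [t])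
        · exact fun x hx => hLS x (List.mem_append_left _ hx)
        · intro i hi
          have hi' : i < (L₀ ++ [t]).length := by simp; omega
          have := hcol i hi'
          rwa [List.getElem_append_left hi] at this
        · exact hclt
        · exact hprop
        · intro x hx u hu hxu
          have := hout x hx u hu hxu
          rcases List.mem_append.mp this with h | h
          · exact h
          · rw [List.mem_singleton] at h; subst h
            exact absurd hxu.symm (hpush x hx)

end Main

/-- Tuza's theorem: every graph with no cycle of length congruent to 1 mod `k`
is `k`-colorable. -/
theorem stmt19 {V : Type*} [Fintype V] (G : SimpleGraph V) (k : ℕ) (hk : 2 ≤ k)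
    (h : ∀ H : G.Subgraph, IsCycleSubgraph G H → H.edgeSet.ncard % k ≠ 1) :
    G.Colorable k := by
  have hcyc := no_bad_cycle_walk h
  obtain ⟨c, hlt, hproper⟩ :=
    dfs_main hk hcyc (2 * Fintype.card V) ∅ [] (fun _ => 0)
      (by simp [Finset.card_univ])
      List.isChain_nil List.nodup_nil
      (by simp) (by simp) (by simp) (by simp) (by simp)
  exact ⟨Coloring.mk (fun v => ⟨c v, hlt v⟩)
    (fun {u w} huw hEq => hproper u w huw (congrArg Fin.val hEq))⟩
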